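/- If g is a continuous derivator, then for every n ≥ 1 and every x ∈ ℝ, g_n(x) = g_{n−1}(x) · g_1(x); consequently g_n(x) = (g(x) − g(x₀))^n. -/

import Mathlib

open MeasureTheory Set Finset

/-- The jump of `g` at `x`: `Δg(x) = g(x⁺) − g(x)`. -/
noncomputable def jumpOf (g : ℝ → ℝ) (x : ℝ) : ℝ := Function.rightLim g x - g x

/-- Oriented Lebesgue–Stieltjes integral: `∫_a^b f dμ = ∫_{[a,b)} f dμ` if `a ≤ b`,
`= −∫_{[b,a)} f dμ` otherwise. -/
noncomputable def ointeg (μ : MeasureTheory.Measure ℝ) (f : ℝ → ℝ) (a b : ℝ) : ℝ :=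
  if a ≤ b then ∫ s in Set.Ico a b, f s ∂μ else - ∫ s in Set.Ico b a, f s ∂μ

/-- The `g`-monomials centered at `c`, defined from the Lebesgue–Stieltjes measure `μ` of `g`:
`g_0 ≡ 1`, `g_{n+1}(x) = (n+1) ∫_c^x g_n dμ` (oriented). -/
noncomputable def gMon (μ : MeasureTheory.Measure ℝ) (c : ℝ) : ℕ → ℝ → ℝ
  | 0 => fun _ => 1
  | n + 1 => fun x => ((n : ℝ) + 1) * ointeg μ (gMon μ c n) c x

section Aux

variable {g : ℝ → ℝ} {μ : MeasureTheory.Measure ℝ}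

lemma stmt8_atomless (hg : Monotone g) (hc : Continuous g)
    (hμ : ∀ a b : ℝ, a ≤ b → μ (Set.Ico a b) = ENNReal.ofReal (g b - g a)) (x : ℝ) :
    μ {x} = 0 := by
  refine le_antisymm (ENNReal.le_of_forall_pos_le_add fun ε hε _ => ?_) zero_le
  obtain ⟨δ, hδ, hδ'⟩ := Metric.continuousAt_iff.1 (hc.continuousAt (x := x)) ε hε
  have hsub : ({x} : Set ℝ) ⊆ Ico x (x + δ / 2) := by
    intro s hs; rw [mem_singleton_iff] at hs; subst hs
    exact ⟨le_refl _, by linarith⟩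
  calc μ {x} ≤ μ (Ico x (x + δ / 2)) := measure_mono hsub
    _ = ENNReal.ofReal (g (x + δ / 2) - g x) := hμ _ _ (by linarith)
    _ ≤ ENNReal.ofReal ε := by
        refine ENNReal.ofReal_le_ofReal ?_
        have hd : dist (x + δ / 2) x < δ := by
          rw [Real.dist_eq, abs_of_nonneg (by linarith)]; linarith
        have := hδ' hd
        rw [Real.dist_eq, abs_lt] at this
        linarith [this.2]
    _ ≤ 0 + ε := by simp [ENNReal.ofReal_coe_nnreal]

lemma stmt8_meas_lt (hg : Monotone g) (hc : Continuous g)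
    (hμ : ∀ a b : ℝ, a ≤ b → μ (Set.Ico a b) = ENNReal.ofReal (g b - g a))
    {a b : ℝ} (hab : a ≤ b) (c : ℝ) :
    μ (Ico a b ∩ g ⁻¹' Iio c) = ENNReal.ofReal (min c (g b) - g a) := by
  by_cases hca : c ≤ g a
  · have hT : Ico a b ∩ g ⁻¹' Iio c = ∅ := by
      ext s
      simp only [Set.mem_inter_iff, Set.mem_Ico, Set.mem_preimage, Set.mem_Iio,
        Set.mem_empty_iff_false, iff_false, not_and]
      rintro ⟨h1, _⟩ h2
      exact absurd (hg h1) (by linarith)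
    rw [hT, measure_empty]
    symm
    rw [ENNReal.ofReal_eq_zero]
    have := min_le_left c (g b); linarith
  push_neg at hca
  rcases eq_or_lt_of_le hab with rfl | hab'
  · rw [Set.Ico_self, Set.empty_inter, measure_empty]
    symm
    rw [ENNReal.ofReal_eq_zero, min_eq_right hca.le]
    simp
  set T := Ico a b ∩ g ⁻¹' Iio c with hTdef
  have haT : a ∈ T := ⟨⟨le_refl a, hab'⟩, hca⟩
  have hbdd : BddAbove T := ⟨b, fun s hs => le_of_lt hs.1.2⟩
  set β := sSup T with hβdef
  have haβ : a ≤ β := le_csSup hbdd haT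
  have hβb : β ≤ b := csSup_le ⟨a, haT⟩ fun s hs => le_of_lt hs.1.2
  have hsubT : Ico a β ⊆ T := by
    intro s hs
    obtain ⟨t, htT, hst⟩ := exists_lt_of_lt_csSup ⟨a, haT⟩ hs.2
    exact ⟨⟨hs.1, lt_of_lt_of_le hst (le_of_lt htT.1.2)⟩, lt_of_le_of_lt (hg hst.le) htT.2⟩
  have hTsub : T ⊆ Icc a β := fun s hs => ⟨hs.1.1, le_csSup hbdd hs⟩
  have hμT : μ T = ENNReal.ofReal (g β - g a) := by
    have h1 : ENNReal.ofReal (g β - g a) ≤ μ T := by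
      rw [← hμ a β haβ]; exact measure_mono hsubT
    have h3 : μ T ≤ ENNReal.ofReal (g β - g a) := by
      refine le_trans (measure_mono hTsub) ?_
      rw [← Set.Ico_union_right haβ]
      refine le_trans (measure_union_le _ _) ?_
      rw [stmt8_atomless hg hc hμ β, add_zero, hμ a β haβ]
    exact le_antisymm h3 h1
  have hgβc : g β ≤ c := by
    rcases eq_or_lt_of_le haβ with h | haβ'
    · rw [← h]; exact hca.le
    by_contra hcon
    push_neg at hcon
    obtain ⟨δ, hδ, hδ'⟩ := Metric.continuousAt_iff.1 (hc.continuousAt (x := β)) (g β - c)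
      (by linarith)
    set s := max a (β - δ / 2) with hsdef
    have hs1 : s < β := max_lt haβ' (by linarith)
    have hs2 : s ∈ T := hsubT ⟨le_max_left _ _, hs1⟩
    have hd : dist s β < δ := by
      rw [Real.dist_eq, abs_of_nonpos (by linarith)]
      have : β - δ / 2 ≤ s := le_max_right _ _
      linarith
    have h2 := hδ' hd
    rw [Real.dist_eq, abs_lt] at h2
    have : g s < c := hs2.2
    linarith [h2.1]
  have hgβ2 : min c (g b) ≤ g β := by
    rcases eq_or_lt_of_le hβb with h | hβb'
    · rw [h]; exact min_le_right _ _
    refine le_trans (min_le_left _ _) ?_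
    by_contra hcon
    push_neg at hcon
    obtain ⟨δ, hδ, hδ'⟩ := Metric.continuousAt_iff.1 (hc.continuousAt (x := β)) (c - g β)
      (by linarith)
    set s := min ((β + b) / 2) (β + δ / 2) with hsdef
    have hsβ : β < s := lt_min (by linarith) (by linarith)
    have hsb : s < b := lt_of_le_of_lt (min_le_left _ _) (by linarith)
    have hd : dist s β < δ := by
      rw [Real.dist_eq, abs_of_nonneg (by linarith)]
      have : s ≤ β + δ / 2 := min_le_right _ _
      linarith
    have h2 := hδ' hd
    rw [Real.dist_eq, abs_lt] at h2
    have hsc : g s < c := by linarith [h2.2]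
    have hsT : s ∈ T := ⟨⟨haβ.trans hsβ.le, hsb⟩, hsc⟩
    exact absurd (le_csSup hbdd hsT) (not_le.2 hsβ)
  have : g β = min c (g b) := le_antisymm (le_min hgβc (hg hβb)) hgβ2
  rw [hμT, this]

lemma stmt8_meas_Ico (hg : Monotone g) (hc : Continuous g)
    (hμ : ∀ a b : ℝ, a ≤ b → μ (Set.Ico a b) = ENNReal.ofReal (g b - g a))
    {a b : ℝ} (hab : a ≤ b) {u v : ℝ} (huv : u < v) :
    μ (Ico a b ∩ g ⁻¹' Ico u v) = ENNReal.ofReal (min v (g b) - max u (g a)) := by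
  have hset : Ico a b ∩ g ⁻¹' Ico u v
      = (Ico a b ∩ g ⁻¹' Iio v) \ (Ico a b ∩ g ⁻¹' Iio u) := by
    ext s
    constructor
    · rintro ⟨hs, hgs⟩
      have h1 : u ≤ g s := hgs.1
      have h2 : g s < v := hgs.2
      exact ⟨⟨hs, h2⟩, fun hmem => absurd hmem.2 (not_lt.2 h1)⟩
    · rintro ⟨⟨hs, h2⟩, hns⟩
      refine ⟨hs, ?_, h2⟩
      by_contra hlt
      push_neg at hlt
      exact hns ⟨hs, hlt⟩
  have hmeas : MeasurableSet (Ico a b ∩ g ⁻¹' Iio u) :=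
    measurableSet_Ico.inter (hc.measurable measurableSet_Iio)
  have hsub : (Ico a b ∩ g ⁻¹' Iio u) ⊆ (Ico a b ∩ g ⁻¹' Iio v) :=
    inter_subset_inter_right _ (preimage_mono (Iio_subset_Iio huv.le))
  have hfin : μ (Ico a b ∩ g ⁻¹' Iio u) ≠ ⊤ := by
    rw [stmt8_meas_lt hg hc hμ hab u]; exact ENNReal.ofReal_ne_top
  rw [hset, measure_diff hsub hmeas.nullMeasurableSet hfin, stmt8_meas_lt hg hc hμ hab v,
    stmt8_meas_lt hg hc hμ hab u]
  rcases le_total u (g a) with h | h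
  · rw [max_eq_right h]
    have h0 : ENNReal.ofReal (min u (g b) - g a) = 0 := by
      rw [ENNReal.ofReal_eq_zero]
      have := min_le_left u (g b); linarith
    rw [h0, tsub_zero]
  · rw [max_eq_left h]
    rcases le_total u (g b) with h2 | h2
    · rw [← ENNReal.ofReal_sub _ (by rw [min_eq_left h2]; linarith [hg hab])]
      congr 1
      rw [min_eq_left h2]
      ring
    · have hvb : min v (g b) = g b := min_eq_right (h2.trans huv.le)
      have hub : min u (g b) = g b := min_eq_right h2
      rw [hvb, hub, tsub_self]
      symm
      rw [ENNReal.ofReal_eq_zero]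
      linarith

lemma stmt8_map_eq (hg : Monotone g) (hc : Continuous g)
    (hμ : ∀ a b : ℝ, a ≤ b → μ (Set.Ico a b) = ENNReal.ofReal (g b - g a))
    {a b : ℝ} (hab : a ≤ b) :
    (μ.restrict (Ico a b)).map g = (volume : Measure ℝ).restrict (Ico (g a) (g b)) := by
  have happ : ∀ u v : ℝ, u < v →
      ((μ.restrict (Ico a b)).map g) (Ico u v)
        = ENNReal.ofReal (min v (g b) - max u (g a)) := by
    intro u v huv
    rw [Measure.map_apply hc.measurable measurableSet_Ico,
      Measure.restrict_apply (hc.measurable measurableSet_Ico), inter_comm]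
    exact stmt8_meas_Ico hg hc hμ hab huv
  refine Measure.ext_of_Ico' _ _ (fun u v huv => ?_) (fun u v huv => ?_)
  · rw [happ u v huv]; exact ENNReal.ofReal_ne_top
  · rw [happ u v huv, Measure.restrict_apply measurableSet_Ico, Set.Ico_inter_Ico,
      Real.volume_Ico]

lemma stmt8_integ_sub (hg : Monotone g) (hc : Continuous g)
    (hμ : ∀ a b : ℝ, a ≤ b → μ (Set.Ico a b) = ENNReal.ofReal (g b - g a))
    {a b : ℝ} (hab : a ≤ b) (f : ℝ → ℝ) (hf : Continuous f) :
    ∫ s in Ico a b, f (g s) ∂μ = ∫ t in Ico (g a) (g b), f t := by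
  rw [← stmt8_map_eq hg hc hμ hab]
  exact (integral_map hc.aemeasurable hf.aestronglyMeasurable).symm

lemma stmt8_pow_integral (p q c : ℝ) (hpq : p ≤ q) (n : ℕ) :
    ∫ t in Ico p q, (t - c) ^ n = ((q - c) ^ (n + 1) - (p - c) ^ (n + 1)) / ((n : ℝ) + 1) := by
  rw [MeasureTheory.integral_Ico_eq_integral_Ioo, ← MeasureTheory.integral_Ioc_eq_integral_Ioo,
    ← intervalIntegral.integral_of_le hpq,
    intervalIntegral.integral_comp_sub_right (fun t => t ^ n) c, integral_pow]

lemma stmt8_key (hg : Monotone g) (hc : Continuous g)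
    (hμ : ∀ a b : ℝ, a ≤ b → μ (Set.Ico a b) = ENNReal.ofReal (g b - g a))
    (c : ℝ) (n : ℕ) {x y : ℝ} (hxy : x ≤ y) :
    ∫ s in Ico x y, (g s - c) ^ n ∂μ
      = ((g y - c) ^ (n + 1) - (g x - c) ^ (n + 1)) / ((n : ℝ) + 1) := by
  rw [stmt8_integ_sub hg hc hμ hxy (fun t => (t - c) ^ n) (by continuity),
    stmt8_pow_integral _ _ _ (hg hxy)]

end Aux

/-- If the derivator `g` is continuous, then for every `n ≥ 1` and every `x`,
`g_n(x) = g_{n−1}(x)·g_1(x)`; consequently `g_n(x) = (g(x) − g(x₀))^n`. -/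
theorem stmt8 (g : ℝ → ℝ) (μ : MeasureTheory.Measure ℝ) (x₀ : ℝ)
    (hg : Monotone g) (hc : Continuous g)
    (hμ : ∀ a b : ℝ, a ≤ b → μ (Set.Ico a b) = ENNReal.ofReal (g b - g a)) :
    ∀ n : ℕ, 1 ≤ n → ∀ x : ℝ,
      gMon μ x₀ n x = gMon μ x₀ (n - 1) x * gMon μ x₀ 1 x ∧
      gMon μ x₀ n x = (g x - g x₀) ^ n := by
  have hpow : ∀ n : ℕ, ∀ x : ℝ, gMon μ x₀ n x = (g x - g x₀) ^ n := by
    intro n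
    induction n with
    | zero => intro x; simp [gMon]
    | succ n ih =>
      intro x
      have hfun : gMon μ x₀ n = fun s => (g s - g x₀) ^ n := funext ih
      show ((n : ℝ) + 1) * ointeg μ (gMon μ x₀ n) x₀ x = (g x - g x₀) ^ (n + 1)
      rw [hfun]
      unfold ointeg
      have hn1 : ((n : ℝ) + 1) ≠ 0 := by positivity
      split_ifs with h
      · rw [stmt8_key hg hc hμ (g x₀) n h]
        rw [sub_self, zero_pow (Nat.succ_ne_zero n), sub_zero]
        field_simp
      · push_neg at h
        rw [stmt8_key hg hc hμ (g x₀) n h.le]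
        rw [sub_self, zero_pow (Nat.succ_ne_zero n), zero_sub, neg_div, neg_neg]
        field_simp
  intro n hn x
  obtain ⟨m, rfl⟩ : ∃ m, n = m + 1 := ⟨n - 1, (Nat.succ_pred_eq_of_pos hn).symm⟩
  refine ⟨?_, hpow _ x⟩
  rw [hpow (m + 1) x, Nat.add_sub_cancel, hpow m x, hpow 1 x, pow_one, pow_succ]
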